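/- Factorization of the generating functional of an LMB (discrete case): for an LMB with r : 𝕃 → [0,1) and pmfs p(·,ℓ) on finite X, and any test function h : X × 𝕃 → [0,1], Σ_{L⊆𝕃} Σ over attribute assignments x of π({(x(ℓ),ℓ):ℓ∈L})·∏_{ℓ∈L} h(x(ℓ),ℓ) = ∏_{ℓ∈𝕃} (1 − r(ℓ) + r(ℓ)·Σ_{y∈X} p(y,ℓ)h(y,ℓ)). -/

import Mathlib

/-- Factorization of the probability generating functional of an LMB (discrete case). -/
theorem lmb_pgfl_factorization
    {𝕃 X : Type*} [Fintype 𝕃] [DecidableEq 𝕃] [Fintype X]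
    (r : 𝕃 → ℝ) (p : X → 𝕃 → ℝ) (h : X → 𝕃 → ℝ)
    (hr0 : ∀ ℓ, 0 ≤ r ℓ) (hr1 : ∀ ℓ, r ℓ < 1)
    (hp0 : ∀ x ℓ, 0 ≤ p x ℓ) (hp1 : ∀ ℓ, ∑ x : X, p x ℓ = 1)
    (hh0 : ∀ x ℓ, 0 ≤ h x ℓ) (hh1 : ∀ x ℓ, h x ℓ ≤ 1) :
    ∑ L : Finset 𝕃, ∑ x : {a // a ∈ L} → X,
        ((∏ ℓ : 𝕃, (1 - r ℓ)) *
            ∏ ℓ ∈ L.attach, r ℓ.1 * p (x ℓ) ℓ.1 / (1 - r ℓ.1)) *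
          ∏ ℓ ∈ L.attach, h (x ℓ) ℓ.1
      = ∏ ℓ : 𝕃, (1 - r ℓ + r ℓ * ∑ y : X, p y ℓ * h y ℓ) := by
  classical
  have hne : ∀ ℓ, (1 : ℝ) - r ℓ ≠ 0 := fun ℓ => by
    have := hr1 ℓ; linarith
  set S : 𝕃 → ℝ := fun ℓ => ∑ y : X, p y ℓ * h y ℓ with hS
  have key : ∀ L : Finset 𝕃,
      (∑ x : {a // a ∈ L} → X,
        ((∏ ℓ : 𝕃, (1 - r ℓ)) *
            ∏ ℓ ∈ L.attach, r ℓ.1 * p (x ℓ) ℓ.1 / (1 - r ℓ.1)) *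
          ∏ ℓ ∈ L.attach, h (x ℓ) ℓ.1)
      = (∏ ℓ ∈ L, (r ℓ * S ℓ)) * ∏ ℓ ∈ Finset.univ \ L, (1 - r ℓ) := by
    intro L
    have step1 : (∑ x : {a // a ∈ L} → X,
        ((∏ ℓ : 𝕃, (1 - r ℓ)) *
            ∏ ℓ ∈ L.attach, r ℓ.1 * p (x ℓ) ℓ.1 / (1 - r ℓ.1)) *
          ∏ ℓ ∈ L.attach, h (x ℓ) ℓ.1)
        = (∏ ℓ : 𝕃, (1 - r ℓ)) *
            ∑ x : {a // a ∈ L} → X,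
              ∏ ℓ ∈ L.attach, (r ℓ.1 * p (x ℓ) ℓ.1 / (1 - r ℓ.1) * h (x ℓ) ℓ.1) := by
      rw [Finset.mul_sum]
      refine Finset.sum_congr rfl fun x _ => ?_
      rw [mul_assoc, ← Finset.prod_mul_distrib]
    rw [step1]
    have step2 : (∑ x : {a // a ∈ L} → X,
          ∏ ℓ ∈ L.attach, (r ℓ.1 * p (x ℓ) ℓ.1 / (1 - r ℓ.1) * h (x ℓ) ℓ.1))
        = ∏ ℓ ∈ L.attach, ∑ y : X, (r ℓ.1 * p y ℓ.1 / (1 - r ℓ.1) * h y ℓ.1) := by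
      rw [← Finset.univ_eq_attach, Finset.prod_univ_sum, ← Fintype.piFinset_univ]
    rw [step2]
    have step3 : ∀ ℓ : 𝕃, (∑ y : X, (r ℓ * p y ℓ / (1 - r ℓ) * h y ℓ))
        = r ℓ * S ℓ / (1 - r ℓ) := by
      intro ℓ
      rw [hS, Finset.mul_sum, Finset.sum_div]
      refine Finset.sum_congr rfl fun y _ => ?_
      field_simp
    have step4 : (∏ ℓ ∈ L.attach, ∑ y : X, (r ℓ.1 * p y ℓ.1 / (1 - r ℓ.1) * h y ℓ.1))
        = ∏ ℓ ∈ L, r ℓ * S ℓ / (1 - r ℓ) := by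
      calc (∏ ℓ ∈ L.attach, ∑ y : X, (r ℓ.1 * p y ℓ.1 / (1 - r ℓ.1) * h y ℓ.1))
          = ∏ ℓ ∈ L.attach, r ℓ.1 * S ℓ.1 / (1 - r ℓ.1) :=
            Finset.prod_congr rfl fun ℓ _ => step3 ℓ.1
        _ = ∏ ℓ ∈ L, r ℓ * S ℓ / (1 - r ℓ) :=
            Finset.prod_attach L (fun ℓ => r ℓ * S ℓ / (1 - r ℓ))
    rw [step4, ← Finset.prod_sdiff (Finset.subset_univ L)]
    have step5 : (∏ ℓ ∈ L, (1 - r ℓ)) * ∏ ℓ ∈ L, r ℓ * S ℓ / (1 - r ℓ)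
        = ∏ ℓ ∈ L, (r ℓ * S ℓ) := by
      rw [← Finset.prod_mul_distrib]
      refine Finset.prod_congr rfl fun ℓ _ => ?_
      rw [mul_comm, div_mul_cancel₀ _ (hne ℓ)]
    calc (∏ ℓ ∈ Finset.univ \ L, (1 - r ℓ)) * (∏ ℓ ∈ L, (1 - r ℓ)) *
          ∏ ℓ ∈ L, r ℓ * S ℓ / (1 - r ℓ)
        = ((∏ ℓ ∈ L, (1 - r ℓ)) * ∏ ℓ ∈ L, r ℓ * S ℓ / (1 - r ℓ)) *
            ∏ ℓ ∈ Finset.univ \ L, (1 - r ℓ) := by ring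
      _ = (∏ ℓ ∈ L, (r ℓ * S ℓ)) * ∏ ℓ ∈ Finset.univ \ L, (1 - r ℓ) := by rw [step5]
  calc (∑ L : Finset 𝕃, ∑ x : {a // a ∈ L} → X,
        ((∏ ℓ : 𝕃, (1 - r ℓ)) *
            ∏ ℓ ∈ L.attach, r ℓ.1 * p (x ℓ) ℓ.1 / (1 - r ℓ.1)) *
          ∏ ℓ ∈ L.attach, h (x ℓ) ℓ.1)
      = ∑ L : Finset 𝕃, (∏ ℓ ∈ L, (r ℓ * S ℓ)) * ∏ ℓ ∈ Finset.univ \ L, (1 - r ℓ) :=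
        Finset.sum_congr rfl fun L _ => key L
    _ = ∑ L ∈ (Finset.univ : Finset 𝕃).powerset,
          (∏ ℓ ∈ L, (r ℓ * S ℓ)) * ∏ ℓ ∈ Finset.univ \ L, (1 - r ℓ) := by
        rw [Finset.powerset_univ]
    _ = ∏ ℓ : 𝕃, (r ℓ * S ℓ + (1 - r ℓ)) := (Finset.prod_add _ _ _).symm
    _ = ∏ ℓ : 𝕃, (1 - r ℓ + r ℓ * ∑ y : X, p y ℓ * h y ℓ) := by
        refine Finset.prod_congr rfl fun ℓ _ => ?_
        simp only [hS]
        ring
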